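/- Let X be a universe with at least two elements and let 𝓛 be a concept class over X that contains the class Sg(X) = {{x} : x ∈ X} of all singletons. Then PBTD(𝓛) = 1 if and only if one of the following holds: (i) 𝓛 = Sg(X); (ii) 𝓛 = Sg(X) ∪ {∅}; (iii) 𝓛 = Sg(X) ∪ {{q, q′}} for some pair of distinct elements q, q′ ∈ X. -/
import Mathlib


namespace PBT

variable {X : Type*}

/-- A set `L ⊆ X` is consistent with a set `T` of labeled examples
(label `true` = “+”, label `false` = “−”). -/
def Consistent (L : Set X) (T : Set (X × Bool)) : Prop :=
  ∀ p ∈ T, (p.2 = true → p.1 ∈ L) ∧ (p.2 = false → p.1 ∉ L)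

/-- `T` is a teaching set for `L` w.r.t. the concept class `𝓛`:
`L` is the only concept in `𝓛` that is consistent with `T`. -/
def IsTeachingSet (𝓛 : Set (Set X)) (L : Set X) (T : Set (X × Bool)) : Prop :=
  Consistent L T ∧ ∀ L' ∈ 𝓛, Consistent L' T → L' = L

/-- `TD L 𝓛`: least size of a finite teaching set for `L` w.r.t. `𝓛` (`⊤` if none exists). -/
noncomputable def TD (L : Set X) (𝓛 : Set (Set X)) : ℕ∞ :=
  sInf {n : ℕ∞ | ∃ T : Finset (X × Bool), IsTeachingSet 𝓛 L ↑T ∧ n = T.card}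

/-- A positive teaching set, identified with its set of (positively labeled) points. -/
def IsPosTeachingSet (𝓛 : Set (Set X)) (L : Set X) (S : Set X) : Prop :=
  S ⊆ L ∧ ∀ L' ∈ 𝓛, S ⊆ L' → L' = L

/-- least size of a finite positive teaching set for `L` w.r.t. `𝓛` (`⊤` if none exists). -/
noncomputable def TDpos (L : Set X) (𝓛 : Set (Set X)) : ℕ∞ :=
  sInf {n : ℕ∞ | ∃ S : Finset X, IsPosTeachingSet 𝓛 L ↑S ∧ n = S.card}

/-- A strict partial order (preference relation) on concepts:
`pr L' L` means `L` is strictly preferred over `L'`. -/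
def StrictPO (pr : Set X → Set X → Prop) : Prop :=
  (∀ A, ¬ pr A A) ∧ ∀ A B C : Set X, pr A B → pr B C → pr A C

/-- `PBTDord 𝓛 pr = sup_{L ∈ 𝓛} TD(L, 𝓛 \ {L' ∈ 𝓛 | pr L' L})`. -/
noncomputable def PBTDord (𝓛 : Set (Set X)) (pr : Set X → Set X → Prop) : ℕ∞ :=
  ⨆ L ∈ 𝓛, TD L {L' ∈ 𝓛 | ¬ pr L' L}

/-- preference-based teaching dimension of `𝓛`. -/
noncomputable def PBTD (𝓛 : Set (Set X)) : ℕ∞ :=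
  sInf {v : ℕ∞ | ∃ pr, StrictPO pr ∧ v = PBTDord 𝓛 pr}

/-- `PBTDposOrd 𝓛 pr = sup_{L ∈ 𝓛} TD⁺(L, 𝓛 \ {L' ∈ 𝓛 | pr L' L})`. -/
noncomputable def PBTDposOrd (𝓛 : Set (Set X)) (pr : Set X → Set X → Prop) : ℕ∞ :=
  ⨆ L ∈ 𝓛, TDpos L {L' ∈ 𝓛 | ¬ pr L' L}

/-- positive preference-based teaching dimension of `𝓛`. -/
noncomputable def PBTDpos (𝓛 : Set (Set X)) : ℕ∞ :=
  sInf {v : ℕ∞ | ∃ pr, StrictPO pr ∧ v = PBTDposOrd 𝓛 pr}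


/-- concrete description of teachability with at most one example -/
def Teach1 (𝓒 : Set (Set X)) (L : Set X) : Prop :=
  (∀ L' ∈ 𝓒, L' = L) ∨
  (∃ x ∈ L, ∀ L' ∈ 𝓒, x ∈ L' → L' = L) ∨
  (∃ z, z ∉ L ∧ ∀ L' ∈ 𝓒, z ∉ L' → L' = L)

lemma TD_le_one_iff {𝓒 : Set (Set X)} {L : Set X} :
    TD L 𝓒 ≤ 1 ↔ Teach1 𝓒 L := by
  constructor
  · intro h
    have h2 : TD L 𝓒 < 2 := lt_of_le_of_lt h (by norm_num)
    rw [TD, sInf_lt_iff] at h2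
    obtain ⟨n, ⟨T, hT, rfl⟩, hn⟩ := h2
    have hc : T.card < 2 := by exact_mod_cast hn
    interval_cases hcard : T.card
    · have hTe : T = ∅ := Finset.card_eq_zero.mp hcard
      subst hTe
      left
      intro L' hL'
      exact hT.2 L' hL' (by intro p hp; simp at hp)
    · obtain ⟨p, hp⟩ := Finset.card_eq_one.mp hcard
      obtain ⟨x, b⟩ := p
      subst hp
      cases b
      · right; right
        refine ⟨x, (hT.1 (x, false) (by simp)).2 rfl, ?_⟩
        intro L' hL' hx
        refine hT.2 L' hL' ?_
        intro p hp
        simp only [Finset.coe_singleton, Set.mem_singleton_iff] at hp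
        subst hp
        exact ⟨by simp, fun _ => hx⟩
      · right; left
        refine ⟨x, (hT.1 (x, true) (by simp)).1 rfl, ?_⟩
        intro L' hL' hx
        refine hT.2 L' hL' ?_
        intro p hp
        simp only [Finset.coe_singleton, Set.mem_singleton_iff] at hp
        subst hp
        exact ⟨fun _ => hx, by simp⟩
  · rintro (hall | ⟨x, hx, hpos⟩ | ⟨z, hz, hneg⟩)
    · refine le_trans (sInf_le ⟨(∅ : Finset (X × Bool)), ⟨?_, ?_⟩, rfl⟩) (by simp)
      · intro p hp; simp at hp
      · intro L' hL' _; exact hall L' hL'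
    · refine le_trans (sInf_le ⟨({(x, true)} : Finset (X × Bool)), ⟨?_, ?_⟩, rfl⟩) (by simp)
      · intro p hp
        simp only [Finset.coe_singleton, Set.mem_singleton_iff] at hp
        subst hp
        exact ⟨fun _ => hx, by simp⟩
      · intro L' hL' hc
        exact hpos L' hL' ((hc (x, true) (by simp)).1 rfl)
    · refine le_trans (sInf_le ⟨({(z, false)} : Finset (X × Bool)), ⟨?_, ?_⟩, rfl⟩) (by simp)
      · intro p hp
        simp only [Finset.coe_singleton, Set.mem_singleton_iff] at hp
        subst hp
        exact ⟨by simp, fun _ => hz⟩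
      · intro L' hL' hc
        exact hneg L' hL' ((hc (z, false) (by simp)).2 rfl)

lemma one_le_TD {𝓒 : Set (Set X)} {L : Set X} (h : ∃ L' ∈ 𝓒, L' ≠ L) :
    1 ≤ TD L 𝓒 := by
  obtain ⟨L', hL', hne⟩ := h
  refine le_sInf ?_
  rintro n ⟨T, hT, rfl⟩
  rcases Finset.eq_empty_or_nonempty T with rfl | hT'
  · exact absurd (hT.2 L' hL' (by intro p hp; simp at hp)) hne
  · exact_mod_cast Nat.one_le_iff_ne_zero.mpr (Finset.card_ne_zero_of_mem hT'.choose_spec)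

lemma asym {pr : Set X → Set X → Prop} (hpo : StrictPO pr) {A B : Set X}
    (h : pr A B) : ¬ pr B A :=
  fun h' => hpo.1 A (hpo.2 A B A h h')


section Core

variable {𝓛 : Set (Set X)} {pr : Set X → Set X → Prop}

lemma star (hsg : ∀ x : X, ({x} : Set X) ∈ 𝓛)
    (hT1 : ∀ L ∈ 𝓛, Teach1 {L' ∈ 𝓛 | ¬ pr L' L} L)
    {L : Set X} (hL : L ∈ 𝓛) {a b : X} (ha : a ∈ L) (hb : b ∈ L) (hab : a ≠ b) :
    ∃ u ∈ L, pr {u} L := by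
  rcases hT1 L hL with hall | ⟨x, hx, hpos⟩ | ⟨z, hz, hneg⟩
  · refine ⟨a, ha, ?_⟩
    by_contra h
    have he := hall {a} ⟨hsg a, h⟩
    rw [← he] at hb
    exact hab (hb.symm ▸ rfl : a = b)
  · refine ⟨x, hx, ?_⟩
    by_contra h
    have he := hpos {x} ⟨hsg x, h⟩ rfl
    rw [← he] at ha hb
    exact hab (ha.trans hb.symm)
  · refine ⟨a, ha, ?_⟩
    by_contra h
    have hza : z ∉ ({a} : Set X) := by
      intro e
      rw [Set.mem_singleton_iff] at e
      exact hz (e ▸ ha)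
    have he := hneg {a} ⟨hsg a, h⟩ hza
    rw [← he] at hb
    exact hab (hb.symm ▸ rfl : a = b)

lemma starstar (hsg : ∀ x : X, ({x} : Set X) ∈ 𝓛) (hpo : StrictPO pr)
    (hT1 : ∀ L ∈ 𝓛, Teach1 {L' ∈ 𝓛 | ¬ pr L' L} L)
    {L : Set X} (hL : L ∈ 𝓛) {u b : X} (hu : u ∈ L) (hb : b ∈ L) (hbu : b ≠ u)
    (hpru : pr {u} L) :
    ∃ z ∈ L, z ≠ u ∧ ∀ M ∈ 𝓛, ¬ pr M {u} → z ∉ M → M = {u} := by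
  have hLC : ¬ pr L {u} := asym hpo hpru
  have hLne : L ≠ {u} := by
    intro e
    rw [e, Set.mem_singleton_iff] at hb
    exact hbu hb
  rcases hT1 {u} (hsg u) with hall | ⟨x, hx, hpos⟩ | ⟨z, hz, hneg⟩
  · exact absurd (hall L ⟨hL, hLC⟩) hLne
  · rw [Set.mem_singleton_iff] at hx
    subst hx
    exact absurd (hpos L ⟨hL, hLC⟩ hu) hLne
  · have hzu : z ≠ u := fun e => hz (by simp [e])
    have hzL : z ∈ L := by
      by_contra h
      exact hLne (hneg L ⟨hL, hLC⟩ h)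
    exact ⟨z, hzL, hzu, fun M hM h1 h2 => hneg M ⟨hM, h1⟩ h2⟩

lemma below_of_prop (hsg : ∀ x : X, ({x} : Set X) ∈ 𝓛) {u z : X}
    (prop : ∀ M ∈ 𝓛, ¬ pr M {u} → z ∉ M → M = {u})
    {v : X} (hvu : v ≠ u) (hvz : v ≠ z) : pr {v} {u} := by
  by_contra h
  have := prop {v} (hsg v) h (by simp [Ne.symm hvz])
  rw [Set.singleton_eq_singleton_iff] at this
  exact hvu this

lemma no_three (hsg : ∀ x : X, ({x} : Set X) ∈ 𝓛) (hpo : StrictPO pr)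
    (hT1 : ∀ L ∈ 𝓛, Teach1 {L' ∈ 𝓛 | ¬ pr L' L} L)
    {L : Set X} (hL : L ∈ 𝓛) {a b c : X}
    (ha : a ∈ L) (hb : b ∈ L) (hc : c ∈ L)
    (hab : a ≠ b) (hac : a ≠ c) (hbc : b ≠ c) : False := by
  obtain ⟨u, hu, hpru⟩ := star hsg hT1 hL ha hb hab
  have hex : ∃ v ∈ L, v ≠ u := by
    by_cases h : a = u
    · exact ⟨b, hb, fun e => hab (h ▸ e ▸ rfl)⟩
    · exact ⟨a, ha, h⟩
  obtain ⟨v, hv, hvu⟩ := hex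
  obtain ⟨z, hzL, hzu, prop⟩ := starstar hsg hpo hT1 hL hu hv hvu hpru
  have hw : ∃ w ∈ L, w ≠ u ∧ w ≠ z := by
    by_cases h1 : a ≠ u ∧ a ≠ z
    · exact ⟨a, ha, h1⟩
    by_cases h2 : b ≠ u ∧ b ≠ z
    · exact ⟨b, hb, h2⟩
    by_cases h3 : c ≠ u ∧ c ≠ z
    · exact ⟨c, hc, h3⟩
    exfalso
    push_neg at h1 h2 h3
    by_cases e1 : a = u <;> by_cases e2 : b = u <;> by_cases e3 : c = u <;>
      simp_all
  obtain ⟨w, hwL, hwu, hwz⟩ := hw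
  have hprwu : pr {w} {u} := below_of_prop hsg prop hwu hwz
  have hprwL : pr {w} L := hpo.2 _ _ _ hprwu hpru
  obtain ⟨z2, hz2L, hz2w, prop2⟩ := starstar hsg hpo hT1 hL hwL hu (Ne.symm hwu) hprwL
  have hz2u : z2 = u := by
    by_contra h
    exact asym hpo hprwu (below_of_prop hsg prop2 (Ne.symm hwu) (fun e => h e.symm))
  rw [hz2u] at prop2
  have hprzw : pr {z} {w} := below_of_prop hsg prop2 (fun e => hwz e.symm) hzu
  have hprzu : pr {z} {u} := hpo.2 _ _ _ hprzw hprwu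
  have hprzL : pr {z} L := hpo.2 _ _ _ hprzu hpru
  obtain ⟨z3, hz3L, hz3z, prop3⟩ := starstar hsg hpo hT1 hL hzL hu (Ne.symm hzu) hprzL
  have hz3u : z3 = u := by
    by_contra h
    exact asym hpo hprzu (below_of_prop hsg prop3 (Ne.symm hzu) (fun e => h e.symm))
  rw [hz3u] at prop3
  exact asym hpo hprzw (below_of_prop hsg prop3 (fun e => hwz e) hwu)

lemma pivot (hsg : ∀ x : X, ({x} : Set X) ∈ 𝓛) (hpo : StrictPO pr)
    (hT1 : ∀ L ∈ 𝓛, Teach1 {L' ∈ 𝓛 | ¬ pr L' L} L)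
    {a b : X} (hab : a ≠ b) (hL : ({a, b} : Set X) ∈ 𝓛) :
    ∃ p o : X, p ≠ o ∧ ({a, b} : Set X) = {p, o} ∧ pr {p} {a, b} ∧
      (∀ M ∈ 𝓛, ¬ pr M {p} → o ∉ M → M = {p}) := by
  obtain ⟨u, hu, hpru⟩ := star hsg hT1 hL (Set.mem_insert a {b})
    (Set.mem_insert_of_mem a rfl) hab
  have hex : ∃ v ∈ ({a, b} : Set X), v ≠ u := by
    rcases hu with rfl | hu
    · exact ⟨b, Set.mem_insert_of_mem _ rfl, Ne.symm hab⟩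
    · rw [Set.mem_singleton_iff] at hu
      subst hu
      exact ⟨a, Set.mem_insert _ _, hab⟩
  obtain ⟨v, hv, hvu⟩ := hex
  obtain ⟨z, hzL, hzu, prop⟩ := starstar hsg hpo hT1 hL hu hv hvu hpru
  refine ⟨u, z, Ne.symm hzu, ?_, hpru, prop⟩
  rcases hu with rfl | hu
  · rcases hzL with rfl | hzL
    · exact absurd rfl hzu
    · rw [Set.mem_singleton_iff] at hzL
      subst hzL
      rfl
  · rw [Set.mem_singleton_iff] at hu
    subst hu
    rcases hzL with rfl | hzL
    · exact Set.pair_comm z u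
    · rw [Set.mem_singleton_iff] at hzL
      exact absurd hzL hzu

end Core


section Core2

variable {𝓛 : Set (Set X)} {pr : Set X → Set X → Prop}

lemma mem_pair_iff {x a b : X} : x ∈ ({a, b} : Set X) ↔ x = a ∨ x = b := by
  simp [Set.mem_insert_iff]

lemma pair_ne_singleton {a b c : X} (hab : a ≠ b) : ({a, b} : Set X) ≠ {c} := by
  intro h
  have ha : a ∈ ({c} : Set X) := h ▸ Set.mem_insert a {b}
  have hb : b ∈ ({c} : Set X) := h ▸ Set.mem_insert_of_mem a rfl
  rw [Set.mem_singleton_iff] at ha hb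
  exact hab (ha.trans hb.symm)

lemma step (hsg : ∀ x : X, ({x} : Set X) ∈ 𝓛) (hpo : StrictPO pr)
    (hT1 : ∀ L ∈ 𝓛, Teach1 {L' ∈ 𝓛 | ¬ pr L' L} L)
    {p o p' o' : X}
    (h1 : p ≠ o) (hL : ({p, o} : Set X) ∈ 𝓛) (hprp : pr {p} {p, o})
    (propP : ∀ M ∈ 𝓛, ¬ pr M {p} → o ∉ M → M = {p})
    (h2 : p' ≠ o') (hL' : ({p', o'} : Set X) ∈ 𝓛) (hprp' : pr {p'} {p', o'})
    (propP' : ∀ M ∈ 𝓛, ¬ pr M {p'} → o' ∉ M → M = {p'})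
    (hne : ({p, o} : Set X) ≠ ({p', o'} : Set X))
    (hp'L : p' = p ∨ p' = o) : False := by
  rcases hp'L with rfl | rfl
  · -- p' = p
    by_cases ho : o ∈ ({p', o'} : Set X)
    · -- o ∈ L' forces L = L'
      rw [mem_pair_iff] at ho
      rcases ho with rfl | rfl
      · exact h1 rfl
      · exact hne rfl
    · have hpr : pr {p', o'} {p'} := by
        by_contra h
        exact pair_ne_singleton h2 (propP _ hL' h ho)
      exact hpo.1 _ (hpo.2 _ _ _ hprp' hpr)
  · -- p' = p', so L = {p, p'} with p' := p'; rename: here p' = p', L = {p, p'}, L' = {p', o'}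
    -- p ∉ L' :
    have hpo' : p ≠ o' := by
      rintro rfl
      exact hne (Set.pair_comm p p')
    have hpL' : p ∉ ({p', o'} : Set X) := by
      rw [mem_pair_iff]
      rintro (rfl | rfl)
      · exact h1 rfl
      · exact hpo' rfl
    have ho'L : o' ∉ ({p, p'} : Set X) := by
      rw [mem_pair_iff]
      rintro (rfl | rfl)
      · exact hpo' rfl
      · exact h2 rfl
    -- pr L {p'}
    have hprLo : pr {p, p'} {p'} := by
      by_contra h
      exact pair_ne_singleton h1 (propP' _ hL h ho'L)
    -- pr {o'} {p}
    have hpro'p : pr {o'} {p} := by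
      by_contra h
      have := propP _ (hsg o') h (by
        rw [Set.mem_singleton_iff]
        rintro rfl
        exact h2 rfl)
      rw [Set.singleton_eq_singleton_iff] at this
      exact hpo' this.symm
    -- pr {p} {p'}
    have hprpo : pr {p} {p'} := by
      by_contra h
      have := propP' _ (hsg p) h (by
        rw [Set.mem_singleton_iff]
        exact fun e => hpo' e.symm)
      rw [Set.singleton_eq_singleton_iff] at this
      exact h1 this
    have hpro'p' : pr {o'} {p'} := hpo.2 _ _ _ hpro'p hprpo
    -- L' not below {o'}
    have hnL'o' : ¬ pr ({p', o'} : Set X) {o'} := by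
      intro h
      exact asym hpo hpro'p' (hpo.2 _ _ _ hprp' h)
    have hL'ne : ({p', o'} : Set X) ≠ {o'} := pair_ne_singleton h2
    rcases hT1 {o'} (hsg o') with hall | ⟨x, hx, hpos⟩ | ⟨z, hz, hneg⟩
    · exact hL'ne (hall _ ⟨hL', hnL'o'⟩)
    · rw [Set.mem_singleton_iff] at hx
      subst hx
      exact hL'ne (hpos _ ⟨hL', hnL'o'⟩ (Set.mem_insert_of_mem _ rfl))
    · have hzp : z = p := by
        by_contra h
        have := hneg {p} ⟨hsg p, asym hpo hpro'p⟩ (by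
          rw [Set.mem_singleton_iff]; exact h)
        rw [Set.singleton_eq_singleton_iff] at this
        exact hpo' this
      subst hzp
      have := hneg {p'} ⟨hsg p', asym hpo hpro'p'⟩ (by
        rw [Set.mem_singleton_iff]; exact h1)
      rw [Set.singleton_eq_singleton_iff] at this
      exact h2 this

lemma no_two (hsg : ∀ x : X, ({x} : Set X) ∈ 𝓛) (hpo : StrictPO pr)
    (hT1 : ∀ L ∈ 𝓛, Teach1 {L' ∈ 𝓛 | ¬ pr L' L} L)
    {a b c d : X} (hab : a ≠ b) (hcd : c ≠ d)
    (hL : ({a, b} : Set X) ∈ 𝓛) (hL' : ({c, d} : Set X) ∈ 𝓛)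
    (hne : ({a, b} : Set X) ≠ ({c, d} : Set X)) : False := by
  obtain ⟨p, o, hpo1, heq1, hprp, propP⟩ := pivot hsg hpo hT1 hab hL
  obtain ⟨p', o', hpo2, heq2, hprp', propP'⟩ := pivot hsg hpo hT1 hcd hL'
  rw [heq1] at hL hprp hne
  rw [heq2] at hL' hprp' hne
  -- p ∈ L' ∨ p' ∈ L
  by_cases hp : p ∈ ({p', o'} : Set X)
  · rw [mem_pair_iff] at hp
    exact step hsg hpo hT1 hpo2 hL' hprp' propP' hpo1 hL hprp propP hne.symm hp
  · by_cases hp' : p' ∈ ({p, o} : Set X)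
    · rw [mem_pair_iff] at hp'
      exact step hsg hpo hT1 hpo1 hL hprp propP hpo2 hL' hprp' propP' hne hp'
    · -- both pivots outside the other pair: contradiction
      have hA : pr {p} {p'} := by
        by_contra h
        have := propP' _ (hsg p) h (by
          rw [Set.mem_singleton_iff]
          rintro rfl
          exact hp (Set.mem_insert_of_mem _ rfl))
        rw [Set.singleton_eq_singleton_iff] at this
        exact hp (this ▸ Set.mem_insert _ _)
      have hB : pr {p'} {p} := by
        by_contra h
        have := propP _ (hsg p') h (by
          rw [Set.mem_singleton_iff]
          rintro rfl
          exact hp' (Set.mem_insert_of_mem _ rfl))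
        rw [Set.singleton_eq_singleton_iff] at this
        exact hp' (this ▸ Set.mem_insert _ _)
      exact asym hpo hA hB

lemma no_empty_dbl (hsg : ∀ x : X, ({x} : Set X) ∈ 𝓛) (hpo : StrictPO pr)
    (hT1 : ∀ L ∈ 𝓛, Teach1 {L' ∈ 𝓛 | ¬ pr L' L} L)
    (he : (∅ : Set X) ∈ 𝓛) {a b : X} (hab : a ≠ b)
    (hL : ({a, b} : Set X) ∈ 𝓛) : False := by
  obtain ⟨p, o, hpo1, heq1, hprp, propP⟩ := pivot hsg hpo hT1 hab hL
  rw [heq1] at hL hprp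
  have hprE : pr ∅ {p} := by
    by_contra h
    exact (Set.singleton_ne_empty p) (propP _ he h (Set.notMem_empty o)).symm
  rcases hT1 ∅ he with hall | ⟨x, hx, _⟩ | ⟨z, hz, hneg⟩
  · exact Set.singleton_ne_empty p (hall {p} ⟨hsg p, asym hpo hprE⟩)
  · exact Set.notMem_empty x hx
  · have hzp : z = p := by
      by_contra h
      exact Set.singleton_ne_empty p
        (hneg {p} ⟨hsg p, asym hpo hprE⟩ (by rw [Set.mem_singleton_iff]; exact h))
    rw [hzp] at hneg
    have hproE : pr {o} ∅ := by
      by_contra h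
      exact Set.singleton_ne_empty o
        (hneg {o} ⟨hsg o, h⟩ (by rw [Set.mem_singleton_iff]; exact hpo1))
    have hprop : pr {o} {p} := hpo.2 _ _ _ hproE hprE
    have hnLo : ¬ pr ({p, o} : Set X) {o} := by
      intro h
      exact asym hpo hprop (hpo.2 _ _ _ hprp h)
    have hLne : ({p, o} : Set X) ≠ {o} := pair_ne_singleton hpo1
    rcases hT1 {o} (hsg o) with hall | ⟨x, hx, hpos⟩ | ⟨z2, hz2, hneg2⟩
    · exact hLne (hall _ ⟨hL, hnLo⟩)
    · rw [Set.mem_singleton_iff] at hx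
      subst hx
      exact hLne (hpos _ ⟨hL, hnLo⟩ (Set.mem_insert_of_mem _ rfl))
    · exact Set.singleton_ne_empty o
        (hneg2 ∅ ⟨he, asym hpo hproE⟩ (Set.notMem_empty z2)).symm

lemma shape (hsg : ∀ x : X, ({x} : Set X) ∈ 𝓛) (hpo : StrictPO pr)
    (hT1 : ∀ L ∈ 𝓛, Teach1 {L' ∈ 𝓛 | ¬ pr L' L} L)
    {L : Set X} (hL : L ∈ 𝓛) :
    (∃ x, L = {x}) ∨ L = ∅ ∨ ∃ q q' : X, q ≠ q' ∧ L = {q, q'} := by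
  rcases Set.eq_empty_or_nonempty L with rfl | ⟨a, ha⟩
  · exact Or.inr (Or.inl rfl)
  by_cases h1 : ∀ y ∈ L, y = a
  · exact Or.inl ⟨a, Set.eq_singleton_iff_unique_mem.mpr ⟨ha, h1⟩⟩
  push_neg at h1
  obtain ⟨b, hb, hba⟩ := h1
  by_cases h2 : ∀ y ∈ L, y = a ∨ y = b
  · refine Or.inr (Or.inr ⟨a, b, Ne.symm hba, ?_⟩)
    ext y
    rw [mem_pair_iff]
    exact ⟨h2 y, by rintro (rfl | rfl); exacts [ha, hb]⟩
  push_neg at h2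
  obtain ⟨c, hc, hca, hcb⟩ := h2
  exact absurd (no_three hsg hpo hT1 hL ha hb hc (fun e => hba e.symm)
    (fun e => hca e.symm) (fun e => hcb e.symm)) id

lemma core (hsg : ∀ x : X, ({x} : Set X) ∈ 𝓛) (hpo : StrictPO pr)
    (hT1 : ∀ L ∈ 𝓛, Teach1 {L' ∈ 𝓛 | ¬ pr L' L} L) :
    (𝓛 = {S : Set X | ∃ x : X, S = {x}} ∨
     𝓛 = {S : Set X | ∃ x : X, S = {x}} ∪ {∅} ∨
     ∃ q q' : X, q ≠ q' ∧ 𝓛 = {S : Set X | ∃ x : X, S = {x}} ∪ {{q, q'}}) := by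
  by_cases hN : ∀ L ∈ 𝓛, ∃ x : X, L = {x}
  · left
    ext S
    exact ⟨fun h => hN S h, fun ⟨x, hx⟩ => hx ▸ hsg x⟩
  push_neg at hN
  obtain ⟨M, hM, hMn0⟩ := hN
  have hMn : ¬ ∃ x : X, M = {x} := fun ⟨x, hx⟩ => hMn0 x hx
  have huniq : ∀ M' ∈ 𝓛, (¬ ∃ x : X, M' = {x}) → M' = M := by
    intro M' hM' hM'n
    rcases shape hsg hpo hT1 hM with hs | hM0 | ⟨q, q', hqq', hMd⟩
    · exact absurd hs hMn
    · rcases shape hsg hpo hT1 hM' with hs | hM'0 | ⟨r, r', hrr', hM'd⟩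
      · exact absurd hs hM'n
      · rw [hM0, hM'0]
      · exact absurd (no_empty_dbl hsg hpo hT1 (hM0 ▸ hM) hrr' (hM'd ▸ hM')) id
    · rcases shape hsg hpo hT1 hM' with hs | hM'0 | ⟨r, r', hrr', hM'd⟩
      · exact absurd hs hM'n
      · exact absurd (no_empty_dbl hsg hpo hT1 (hM'0 ▸ hM') hqq' (hMd ▸ hM)) id
      · by_contra hne
        refine no_two hsg hpo hT1 hrr' hqq' (hM'd ▸ hM') (hMd ▸ hM) ?_
        rw [← hM'd, ← hMd]
        exact fun e => hne (e.symm ▸ rfl)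
  have hunion : 𝓛 = {S : Set X | ∃ x : X, S = {x}} ∪ {M} := by
    ext S
    constructor
    · intro hS
      by_cases hs : ∃ x : X, S = {x}
      · exact Or.inl hs
      · exact Or.inr (huniq S hS hs)
    · rintro (⟨x, rfl⟩ | rfl)
      · exact hsg x
      · exact hM
  rcases shape hsg hpo hT1 hM with hs | rfl | ⟨q, q', hqq', rfl⟩
  · exact absurd hs hMn
  · exact Or.inr (Or.inl hunion)
  · exact Or.inr (Or.inr ⟨q, q', hqq', hunion⟩)

end Core2


section Constr

variable {𝓛 : Set (Set X)}

lemma enat_le_one_of_lt_two {v : ℕ∞} (h : v < 2) : v ≤ 1 := by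
  induction v using ENat.recTopCoe with
  | top => simp at h
  | coe n =>
    have : n < 2 := by exact_mod_cast h
    exact_mod_cast Nat.lt_succ_iff.mp this

lemma one_le_PBTD (hX : ∃ x y : X, x ≠ y)
    (hsg : ∀ x : X, ({x} : Set X) ∈ 𝓛) : 1 ≤ PBTD 𝓛 := by
  refine le_sInf ?_
  rintro v ⟨pr, hpo, rfl⟩
  obtain ⟨x, y, hxy⟩ := hX
  have hsne : ∀ {a b : X}, a ≠ b → ({a} : Set X) ≠ {b} := fun h e =>
    h (Set.singleton_eq_singleton_iff.mp e)
  unfold PBTDord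
  by_cases hpr : pr {y} {x}
  · refine le_trans ?_ (le_biSup _ (hsg y))
    exact one_le_TD ⟨{x}, ⟨hsg x, asym hpo hpr⟩, hsne hxy⟩
  · refine le_trans ?_ (le_biSup _ (hsg x))
    exact one_le_TD ⟨{y}, ⟨hsg y, hpr⟩, hsne (Ne.symm hxy)⟩

lemma PBTD_le_of (pr : Set X → Set X → Prop) (hpo : StrictPO pr)
    (h : ∀ L ∈ 𝓛, Teach1 {L' ∈ 𝓛 | ¬ pr L' L} L) :
    PBTD 𝓛 ≤ 1 := by
  refine le_trans (sInf_le ⟨pr, hpo, rfl⟩) ?_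
  unfold PBTDord
  exact iSup₂_le fun L hL => TD_le_one_iff.mpr (h L hL)

/-- Case (i) construction -/
lemma constr_sg (hX : ∃ x y : X, x ≠ y) :
    PBTD {S : Set X | ∃ x : X, S = {x}} = 1 := by
  have hsg : ∀ x : X, ({x} : Set X) ∈ {S : Set X | ∃ x : X, S = {x}} :=
    fun x => ⟨x, rfl⟩
  refine le_antisymm ?_ (one_le_PBTD hX hsg)
  refine PBTD_le_of (fun _ _ => False) ⟨fun _ h => h, fun _ _ _ h _ => h.elim⟩ ?_
  rintro L ⟨x, rfl⟩
  right; left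
  refine ⟨x, rfl, ?_⟩
  rintro L' ⟨⟨y, rfl⟩, -⟩ hx
  rw [Set.mem_singleton_iff] at hx
  rw [hx]

/-- Case (ii) construction -/
lemma constr_empty (hX : ∃ x y : X, x ≠ y) :
    PBTD ({S : Set X | ∃ x : X, S = {x}} ∪ {∅}) = 1 := by
  have hsg : ∀ x : X, ({x} : Set X) ∈ ({S : Set X | ∃ x : X, S = {x}} ∪ {∅}) :=
    fun x => Or.inl ⟨x, rfl⟩
  refine le_antisymm ?_ (one_le_PBTD hX hsg)
  refine PBTD_le_of (fun A B => (∃ x : X, A = {x}) ∧ B = ∅) ⟨?_, ?_⟩ ?_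
  · rintro A ⟨⟨x, rfl⟩, h0⟩
    exact Set.singleton_ne_empty x h0
  · rintro A B C ⟨hA, rfl⟩ ⟨⟨y, hy⟩, rfl⟩
    exact absurd hy (Set.singleton_ne_empty y).symm.elim
  · rintro L (⟨x, rfl⟩ | hL)
    · right; left
      refine ⟨x, rfl, ?_⟩
      rintro L' ⟨(⟨y, rfl⟩ | hL'), -⟩ hx
      · rw [Set.mem_singleton_iff] at hx
        rw [hx]
      · rw [Set.mem_singleton_iff] at hL'
        subst hL'
        exact absurd hx (Set.notMem_empty x)
    · rw [Set.mem_singleton_iff] at hL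
      subst hL
      left
      rintro L' ⟨(⟨y, rfl⟩ | hL'), hnpr⟩
      · exact absurd ⟨⟨y, rfl⟩, rfl⟩ hnpr
      · exact hL'

/-- Case (iii) construction -/
lemma constr_pair (hX : ∃ x y : X, x ≠ y) {q q' : X} (hqq' : q ≠ q') :
    PBTD ({S : Set X | ∃ x : X, S = {x}} ∪ {{q, q'}}) = 1 := by
  classical
  have hsg : ∀ x : X, ({x} : Set X) ∈ ({S : Set X | ∃ x : X, S = {x}} ∪ {{q, q'}}) :=
    fun x => Or.inl ⟨x, rfl⟩
  refine le_antisymm ?_ (one_le_PBTD hX hsg)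
  set r : Set X → ℕ := fun S =>
    if S = {q, q'} then 2 else if S = {q} ∨ S = {q'} then 1 else 0 with hr
  have hsne_pair : ∀ y : X, ({y} : Set X) ≠ {q, q'} :=
    fun y h => pair_ne_singleton hqq' h.symm
  have hr2 : r {q, q'} = 2 := if_pos rfl
  have hr1q : r {q} = 1 := by
    show (if ({q} : Set X) = {q, q'} then 2 else if ({q} : Set X) = {q} ∨ ({q} : Set X) = {q'} then 1 else 0) = 1
    rw [if_neg (hsne_pair q)]
    exact if_pos (Or.inl rfl)
  have hr1q' : r {q'} = 1 := by
    show (if ({q'} : Set X) = {q, q'} then 2 else if ({q'} : Set X) = {q} ∨ ({q'} : Set X) = {q'} then 1 else 0) = 1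
    rw [if_neg (hsne_pair q')]
    exact if_pos (Or.inr rfl)
  have hr0 : ∀ x : X, x ≠ q → x ≠ q' → r {x} = 0 := by
    intro x h1 h2
    show (if ({x} : Set X) = {q, q'} then 2 else if ({x} : Set X) = {q} ∨ ({x} : Set X) = {q'} then 1 else 0) = 0
    rw [if_neg (hsne_pair x), if_neg]
    rintro (h | h) <;> rw [Set.singleton_eq_singleton_iff] at h
    · exact h1 h
    · exact h2 h
  have hrlt2 : ∀ y : X, r {y} < 2 := by
    intro y
    show (if ({y} : Set X) = {q, q'} then 2 else if ({y} : Set X) = {q} ∨ ({y} : Set X) = {q'} then 1 else 0) < 2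
    rw [if_neg (hsne_pair y)]
    split <;> norm_num
  refine PBTD_le_of (fun A B => r A < r B)
    ⟨fun A => lt_irrefl _, fun A B C => lt_trans⟩ ?_
  rintro L (⟨x, rfl⟩ | hL)
  · -- singleton {x}
    by_cases hxq : x = q
    · rw [hxq]
      -- teach {q} with negative example q'
      right; right
      refine ⟨q', fun h => hqq' (Set.mem_singleton_iff.mp h).symm, ?_⟩
      rintro L' ⟨(⟨y, rfl⟩ | hL'), hnlt⟩ hq'
      · -- singleton {y} with rank ≥ 1 and q' ∉ {y}
        replace hnlt : ¬ r {y} < r {q} := hnlt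
        rw [hr1q] at hnlt
        by_cases hyq : y = q
        · rw [hyq]
        by_cases hyq' : y = q'
        · exact absurd (hyq' ▸ rfl) hq'
        · exact absurd (by rw [hr0 y hyq hyq']; norm_num) hnlt
      · rw [Set.mem_singleton_iff] at hL'
        subst hL'
        exact absurd (Set.mem_insert_of_mem q rfl) hq'
    by_cases hxq' : x = q'
    · rw [hxq']
      right; right
      refine ⟨q, fun h => hqq' (Set.mem_singleton_iff.mp h), ?_⟩
      rintro L' ⟨(⟨y, rfl⟩ | hL'), hnlt⟩ hq
      · replace hnlt : ¬ r {y} < r {q'} := hnlt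
        rw [hr1q'] at hnlt
        by_cases hyq' : y = q'
        · rw [hyq']
        by_cases hyq : y = q
        · exact absurd (hyq ▸ rfl) hq
        · exact absurd (by rw [hr0 y hyq hyq']; norm_num) hnlt
      · rw [Set.mem_singleton_iff] at hL'
        subst hL'
        exact absurd (Set.mem_insert q {q'}) hq
    · -- generic singleton: positive example x
      right; left
      refine ⟨x, rfl, ?_⟩
      rintro L' ⟨(⟨y, rfl⟩ | hL'), -⟩ hx
      · rw [Set.mem_singleton_iff] at hx
        rw [hx]
      · rw [Set.mem_singleton_iff] at hL'
        subst hL'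
        rcases hx with h | h
        · exact absurd h hxq
        · exact absurd (Set.mem_singleton_iff.mp h) hxq'
  · -- L = {q, q'}
    rw [Set.mem_singleton_iff] at hL
    subst hL
    left
    rintro L' ⟨(⟨y, rfl⟩ | hL'), hnlt⟩
    · replace hnlt : ¬ r {y} < r {q, q'} := hnlt
      rw [hr2] at hnlt
      exact absurd (hrlt2 y) hnlt
    · exact Set.mem_singleton_iff.mp hL'

end Constr


/-- For a class `𝓛` over a universe with at least two elements that contains all
singletons `Sg(X)`: `PBTD(𝓛) = 1` iff `𝓛 = Sg(X)`, or `𝓛 = Sg(X) ∪ {∅}`, or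
`𝓛 = Sg(X) ∪ {{q,q'}}` for some distinct `q, q'`. -/
theorem pbtd_eq_one_of_singletons {X : Type*} (hX : ∃ x y : X, x ≠ y)
    (𝓛 : Set (Set X)) (hsg : ∀ x : X, ({x} : Set X) ∈ 𝓛) :
    PBTD 𝓛 = 1 ↔
      (𝓛 = {S : Set X | ∃ x : X, S = {x}} ∨
       𝓛 = {S : Set X | ∃ x : X, S = {x}} ∪ {∅} ∨
       ∃ q q' : X, q ≠ q' ∧ 𝓛 = {S : Set X | ∃ x : X, S = {x}} ∪ {{q, q'}}) := by
  constructor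
  · intro h
    have h2 : PBTD 𝓛 < 2 := by rw [h]; norm_num
    rw [PBTD, sInf_lt_iff] at h2
    obtain ⟨v, ⟨pr, hpo, rfl⟩, hv⟩ := h2
    have hT1 : ∀ L ∈ 𝓛, Teach1 {L' ∈ 𝓛 | ¬ pr L' L} L := by
      intro L hL
      have hle : TD L {L' ∈ 𝓛 | ¬ pr L' L} ≤ PBTDord 𝓛 pr :=
        le_biSup (fun L => TD L {L' ∈ 𝓛 | ¬ pr L' L}) hL
      exact TD_le_one_iff.mp (enat_le_one_of_lt_two (lt_of_le_of_lt hle hv))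
    exact core hsg hpo hT1
  · rintro (rfl | rfl | ⟨q, q', hqq', rfl⟩)
    · exact constr_sg hX
    · exact constr_empty hX
    · exact constr_pair hX hqq'


end PBT
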